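/- arXiv:2503.16621 — 2 statements merged into one kernel-verified Lean document; each statement's English description precedes it below -/
import Mathlib

section
/- Fix natural numbers n, k, a qualification function o* : Fin n → Bool, and a baseline allocation S₀ ⊆ Fin n with |S₀| = k and utility count k' = |{i ∈ S₀ : o* i = true}|. If 1 ≤ k' and k' < k, then for every individual i ∈ Fin n there exists an allocation S ⊆ Fin n with |S| = k, utility count |{j ∈ S : o* j = true}| = k', and i ∈ S. -/
/-- If `1 ≤ k'` and `k' < k`, every individual belongs to some equal-utility
allocation. -/
theorem every_individual_in_some_equal_utility_allocation
    (n k k' : ℕ) (o : Fin n → Bool)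
    (S₀ : Finset (Fin n)) (hS₀ : S₀.card = k)
    (hk' : (S₀.filter (fun i => o i = true)).card = k')
    (h1 : 1 ≤ k') (h2 : k' < k) :
    ∀ i : Fin n, ∃ S : Finset (Fin n), S.card = k ∧
      (S.filter (fun j => o j = true)).card = k' ∧ i ∈ S := by
  intro i
  by_cases hi : i ∈ S₀
  · exact ⟨S₀, hS₀, hk', hi⟩
  · -- need j ∈ S₀ with o j = o i
    by_cases hoi : o i = true
    · -- pick j qualified
      have hne : (S₀.filter (fun i => o i = true)).Nonempty := by
        rw [← Finset.card_pos, hk']; omega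
      obtain ⟨j, hj⟩ := hne
      have hjS : j ∈ S₀ := (Finset.mem_filter.mp hj).1
      refine ⟨insert i (S₀.erase j), ?_, ?_, Finset.mem_insert_self _ _⟩
      · rw [Finset.card_insert_of_notMem (fun h => hi (Finset.mem_of_mem_erase h)),
          Finset.card_erase_of_mem hjS, hS₀]
        omega
      · rw [Finset.filter_insert, if_pos hoi, Finset.filter_erase,
          Finset.card_insert_of_notMem
            (fun h => hi (Finset.mem_of_mem_filter _ (Finset.mem_of_mem_erase h))),
          Finset.card_erase_of_mem hj, hk']
        omega
    · -- pick j unqualified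
      have hsplit := Finset.card_filter_add_card_filter_not
        (s := S₀) (p := fun i => o i = true)
      have hne : (S₀.filter (fun i => ¬ o i = true)).Nonempty := by
        rw [← Finset.card_pos]; omega
      obtain ⟨j, hj⟩ := hne
      have hjS : j ∈ S₀ := (Finset.mem_filter.mp hj).1
      have hjo : ¬ o j = true := (Finset.mem_filter.mp hj).2
      refine ⟨insert i (S₀.erase j), ?_, ?_, Finset.mem_insert_self _ _⟩
      · rw [Finset.card_insert_of_notMem (fun h => hi (Finset.mem_of_mem_erase h)),
          Finset.card_erase_of_mem hjS, hS₀]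
        omega
      · have hnotin : j ∉ S₀.filter (fun j => o j = true) :=
          fun h => hjo (Finset.mem_filter.mp h).2
        rw [Finset.filter_insert, if_neg hoi, Finset.filter_erase,
          Finset.erase_eq_of_notMem hnotin, hk']
end

section
/- Fix natural numbers n, k, a qualification function o* : Fin n → Bool, and a baseline allocation S₀ ⊆ Fin n with |S₀| = k and utility count k' = |{i ∈ S₀ : o* i = true}|. If 1 ≤ k' and k' < k, then there exists a finite family of allocations, each of them a subset S ⊆ Fin n with |S| = k and utility count exactly k', such that every individual i ∈ Fin n belongs to at least one allocation in the family. -/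
/-- If `1 ≤ k'` and `k' < k`, there is a finite family of equal-utility
allocations covering every individual. -/
theorem family_of_equal_utility_allocations_covering_everyone
    (n k k' : ℕ) (o : Fin n → Bool)
    (S₀ : Finset (Fin n)) (hS₀ : S₀.card = k)
    (hk' : (S₀.filter (fun i => o i = true)).card = k')
    (h1 : 1 ≤ k') (h2 : k' < k) :
    ∃ F : Finset (Finset (Fin n)),
      (∀ S ∈ F, S.card = k ∧ (S.filter (fun j => o j = true)).card = k') ∧
      (∀ i : Fin n, ∃ S ∈ F, i ∈ S) := by
  have key : ∀ i : Fin n, ∃ S : Finset (Fin n),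
      S.card = k ∧ (S.filter (fun j => o j = true)).card = k' ∧ i ∈ S := by
    intro i
    by_cases hi : i ∈ S₀
    · exact ⟨S₀, hS₀, hk', hi⟩
    · by_cases ho : o i = true
      · -- swap out a qualified element
        have hne : (S₀.filter (fun j => o j = true)).Nonempty := by
          rw [← Finset.card_pos, hk']; omega
        obtain ⟨j, hj⟩ := hne
        have hjS := Finset.mem_filter.mp hj
        refine ⟨insert i (S₀.erase j), ?_, ?_, Finset.mem_insert_self _ _⟩
        · rw [Finset.card_insert_of_notMem (fun h => hi (Finset.mem_of_mem_erase h)),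
            Finset.card_erase_of_mem hjS.1, hS₀]
          omega
        · rw [Finset.filter_insert, if_pos ho, Finset.filter_erase,
            Finset.card_insert_of_notMem (fun h => hi (Finset.mem_of_mem_filter _ (Finset.mem_of_mem_erase h))),
            Finset.card_erase_of_mem hj, hk']
          omega
      · -- swap out an unqualified element
        have hne : (S₀.filter (fun j => ¬ (o j = true))).Nonempty := by
          rw [← Finset.card_pos, Finset.filter_not, Finset.card_sdiff_of_subset (Finset.filter_subset _ _),
            hS₀, hk']
          omega
        obtain ⟨j, hj⟩ := hne
        have hjS := Finset.mem_filter.mp hj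
        refine ⟨insert i (S₀.erase j), ?_, ?_, Finset.mem_insert_self _ _⟩
        · rw [Finset.card_insert_of_notMem (fun h => hi (Finset.mem_of_mem_erase h)),
            Finset.card_erase_of_mem hjS.1, hS₀]
          omega
        · rw [Finset.filter_insert, if_neg ho, Finset.filter_erase]
          have hjn : j ∉ S₀.filter (fun j => o j = true) :=
            fun h => hjS.2 (Finset.mem_filter.mp h).2
          rw [Finset.erase_eq_of_notMem hjn, hk']
  choose f hf1 hf2 hf3 using key
  refine ⟨Finset.image f Finset.univ, ?_, ?_⟩
  · intro S hS
    obtain ⟨i, _, rfl⟩ := Finset.mem_image.mp hS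
    exact ⟨hf1 i, hf2 i⟩
  · intro i
    exact ⟨f i, Finset.mem_image_of_mem f (Finset.mem_univ i), hf3 i⟩
end
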